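/- Let $\chi_2 \in L^\infty(0,1)$ with $\chi_2(x) > 0$ for a.e. $x \in (0,1)$. If $\alpha \in \mathbb{C}$ satisfies both $\alpha^2 \int_0^1 \chi_2\,dx + 2\alpha \int_0^1 \chi_2 x\,dx + \int_0^1 \chi_2 x^2\,dx = 0$ and $\alpha^2 \int_0^1 \chi_2 x\,dx + 2\alpha \int_0^1 \chi_2 x^2\,dx + \int_0^1 \chi_2 x^3\,dx = 0$, then $\alpha$ is real. -/

import Mathlib

open MeasureTheory Set

/-- If `χ₂ ∈ L^∞(0,1)` is a.e. positive and `α ∈ ℂ` satisfies the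
two quadratic equations with the moments of `χ₂`, then `α` is real. -/
theorem stmt_1 (χ₂ : ℝ → ℝ) (hmeas : Measurable χ₂)
    (hbdd : ∃ M : ℝ, ∀ᵐ x ∂(volume.restrict (Ioo (0:ℝ) 1)), |χ₂ x| ≤ M)
    (hpos : ∀ᵐ x ∂(volume.restrict (Ioo (0:ℝ) 1)), 0 < χ₂ x)
    (α : ℂ)
    (h1 : α ^ 2 * ((∫ x in (0:ℝ)..1, χ₂ x : ℝ) : ℂ) +
          2 * α * ((∫ x in (0:ℝ)..1, χ₂ x * x : ℝ) : ℂ) +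
          ((∫ x in (0:ℝ)..1, χ₂ x * x ^ 2 : ℝ) : ℂ) = 0)
    (h2 : α ^ 2 * ((∫ x in (0:ℝ)..1, χ₂ x * x : ℝ) : ℂ) +
          2 * α * ((∫ x in (0:ℝ)..1, χ₂ x * x ^ 2 : ℝ) : ℂ) +
          ((∫ x in (0:ℝ)..1, χ₂ x * x ^ 3 : ℝ) : ℂ) = 0) :
    α.im = 0 := by
  set μ := volume.restrict (Ioo (0:ℝ) 1) with hμ
  obtain ⟨M, hM⟩ := hbdd
  -- integrability of χ₂ * g for continuous g
  have hint : ∀ g : ℝ → ℝ, Continuous g → Integrable (fun x => χ₂ x * g x) μ := by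
    intro g hg
    obtain ⟨C, hC⟩ := (isCompact_Icc (a := (0:ℝ)) (b := 1)).exists_bound_of_continuousOn
      hg.continuousOn
    refine (integrable_const (M * C)).mono'
      ((hmeas.mul hg.measurable).aestronglyMeasurable) ?_
    have hmem : ∀ᵐ x ∂μ, x ∈ Ioo (0:ℝ) 1 :=
      ae_restrict_mem measurableSet_Ioo
    filter_upwards [hM, hmem] with x hx hx2
    have hgx : |g x| ≤ C := by
      simpa [Real.norm_eq_abs] using hC x (Ioo_subset_Icc_self hx2)
    have h0 : (0:ℝ) ≤ M := le_trans (abs_nonneg _) hx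
    calc ‖χ₂ x * g x‖ = |χ₂ x| * |g x| := by simp [abs_mul]
    _ ≤ M * C := mul_le_mul hx hgx (abs_nonneg _) h0
  -- positivity of ∫ χ₂ * g for a.e. positive g
  have hposint : ∀ g : ℝ → ℝ, Continuous g → (∀ᵐ x ∂μ, 0 < g x) →
      0 < ∫ x, χ₂ x * g x ∂μ := by
    intro g hg hgpos
    have hfpos : ∀ᵐ x ∂μ, 0 < χ₂ x * g x := by
      filter_upwards [hpos, hgpos] with x h1 h2 using mul_pos h1 h2
    have hnn : 0 ≤ᵐ[μ] fun x => χ₂ x * g x := hfpos.mono fun x h => le_of_lt h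
    rw [MeasureTheory.integral_pos_iff_support_of_nonneg_ae hnn (hint g hg)]
    have hcompl : μ (Function.support fun x => χ₂ x * g x)ᶜ = 0 := by
      have h0 : μ {x | ¬ 0 < χ₂ x * g x} = 0 := ae_iff.mp hfpos
      refine measure_mono_null ?_ h0
      intro x hx
      simp only [mem_compl_iff, Function.mem_support, not_not] at hx
      simp only [mem_setOf_eq, not_lt]
      exact le_of_eq hx
    by_contra h
    push_neg at h
    have h0 : μ (Function.support fun x => χ₂ x * g x) = 0 := le_antisymm h zero_le
    have := measure_univ_le_add_compl (μ := μ) (Function.support fun x => χ₂ x * g x)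
    rw [h0, hcompl] at this
    simp [hμ, Real.volume_Ioo] at this
  -- convert interval integrals
  have hconv : ∀ f : ℝ → ℝ, (∫ x in (0:ℝ)..1, f x) = ∫ x, f x ∂μ := by
    intro f
    rw [intervalIntegral.integral_of_le (by norm_num : (0:ℝ) ≤ 1),
      MeasureTheory.integral_Ioc_eq_integral_Ioo]
  set a := ∫ x, χ₂ x * (1:ℝ) ∂μ with ha
  set b := ∫ x, χ₂ x * x ∂μ with hb
  set c := ∫ x, χ₂ x * x^2 ∂μ with hc
  set d := ∫ x, χ₂ x * x^3 ∂μ with hd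
  have ha' : (∫ x in (0:ℝ)..1, χ₂ x) = a := by
    rw [hconv]; simp [ha]
  have hb' : (∫ x in (0:ℝ)..1, χ₂ x * x) = b := hconv _
  have hc' : (∫ x in (0:ℝ)..1, χ₂ x * x^2) = c := hconv _
  have hd' : (∫ x in (0:ℝ)..1, χ₂ x * x^3) = d := hconv _
  rw [ha', hb', hc'] at h1
  rw [hb', hc', hd'] at h2
  -- a > 0
  have hA : 0 < a := hposint 1 continuous_const (by filter_upwards with x; norm_num)
  -- key: b^2 - a*c < 0
  have hKpos : 0 < a * c - b^2 := by
    set t := b / a with ht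
    have hP : 0 < ∫ x, χ₂ x * (x - t)^2 ∂μ := by
      refine hposint (fun x => (x - t)^2) ((continuous_id.sub continuous_const).pow 2) ?_
      have : ∀ᵐ x ∂volume, x ≠ t := by
        have : volume ({t} : Set ℝ) = 0 := measure_singleton t
        filter_upwards [measure_eq_zero_iff_ae_notMem.mp this] with x hx
        simpa using hx
      filter_upwards [ae_restrict_of_ae this] with x hx
      have : x - t ≠ 0 := sub_ne_zero.mpr hx
      positivity
    have hexp : (∫ x, χ₂ x * (x - t)^2 ∂μ) = c - 2*t*b + t^2 * a := by
      have heq : (fun x => χ₂ x * (x - t)^2)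
          = fun x => (χ₂ x * x^2 - 2*t*(χ₂ x * x)) + t^2 * (χ₂ x * 1) := by
        funext x; ring
      have i1 : Integrable (fun x => χ₂ x * x^2) μ := hint (fun x => x^2) (continuous_pow 2)
      have i2 : Integrable (fun x => 2*t*(χ₂ x * x)) μ :=
        (hint (fun x => x) continuous_id).const_mul _
      have i3 : Integrable (fun x => t^2*(χ₂ x * 1)) μ :=
        (hint (fun _ => (1:ℝ)) continuous_const).const_mul _
      have i12 : Integrable (fun x => χ₂ x * x^2 - 2*t*(χ₂ x * x)) μ := i1.sub i2
      rw [heq, MeasureTheory.integral_add i12 i3,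
        MeasureTheory.integral_sub i1 i2,
        MeasureTheory.integral_const_mul, MeasureTheory.integral_const_mul]
    rw [hexp] at hP
    have : c - 2*(b/a)*b + (b/a)^2 * a = (a*c - b^2)/a := by
      field_simp; ring
    rw [ht, this] at hP
    exact (div_pos_iff.mp hP).resolve_right (fun h => absurd hA (not_lt.mpr h.2.le)) |>.1
  -- linear equation: 2α(b² - ac) + (bc - ad) = 0
  have hlin : 2 * α * ((b^2 - a*c : ℝ) : ℂ) + (((b*c - a*d : ℝ)) : ℂ) = 0 := by
    push_cast
    linear_combination (b:ℂ) * h1 - (a:ℂ) * h2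
  have hKne : ((b^2 - a*c : ℝ) : ℂ) ≠ 0 := by
    exact_mod_cast (ne_of_lt (by nlinarith : (b^2 - a*c : ℝ) < 0))
  have hα : α = ((-(b*c - a*d) / (2*(b^2 - a*c)) : ℝ) : ℂ) := by
    push_cast at hlin ⊢
    rw [eq_div_iff (by simpa using hKne : 2 * ((b:ℂ)^2 - a*c) ≠ 0)]
    linear_combination hlin
  rw [hα]
  exact Complex.ofReal_im _
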